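/- There are no rational numbers x1,x2,x3,d1,d2,d3,L with x1 > 0, x2 > 0, x3 > 0, d1 > 0, d2 > 0, d3 > 0 satisfying the perfect cuboid factor equations p̃1 = p̃2 = p̃3 = p̃4 = p̃5 = p̃6 = p̃7 = p̃8 = 0 such that the 3×2 matrix N1 with rows (1, d_i) has rank 2, the 3×2 matrix N2 with rows (1, x_i) has rank 2, and the 3×7 matrix N with rows (1, d_i, x_i, x_i·d_i, x_i², d_i², x_i²·d_i²) has rank N ≤ 2. -/

import Mathlib

open Matrix

/-- Any 3×3 minor (column selection) of a 3×7 matrix of rank ≤ 2 has zero determinant. -/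
lemma aux_minor_zero (N : Matrix (Fin 3) (Fin 7) ℚ) (hN : N.rank ≤ 2) (f : Fin 3 → Fin 7) :
    (N.submatrix id f).det = 0 := by
  by_contra h
  have hunit : IsUnit (N.submatrix id f) :=
    (Matrix.isUnit_iff_isUnit_det _).2 (isUnit_iff_ne_zero.2 h)
  have h3 : (N.submatrix id f).rank = 3 := by
    rw [Matrix.rank_of_isUnit _ hunit, Fintype.card_fin]
  have hle : (N.submatrix id f).rank ≤ N.rank := by
    have heq : N.submatrix id f = N * (Matrix.of fun j k => if j = f k then (1:ℚ) else 0) := by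
      ext i k
      simp [Matrix.mul_apply]
    rw [heq]
    exact Matrix.rank_mul_le_left _ _
  omega

lemma aux_rank_const (d : ℚ) : (!![(1:ℚ), d; 1, d; 1, d]).rank ≤ 1 := by
  have heq : !![(1:ℚ), d; 1, d; 1, d] = !![(1:ℚ); 1; 1] * !![(1:ℚ), d] := by
    ext i j
    fin_cases i <;> fin_cases j <;>
      simp [Matrix.mul_apply, Fin.sum_univ_one, Matrix.vecHead, Matrix.vecTail]
  rw [heq]
  calc (!![(1:ℚ); 1; 1] * !![(1:ℚ), d]).rank ≤ (!![(1:ℚ), d]).rank :=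
        Matrix.rank_mul_le_right _ _
    _ ≤ 1 := by simpa using Matrix.rank_le_card_height !![(1:ℚ), d]

lemma aux_rat_sq_ne_two (x e : ℚ) (hx : 0 < x) (he : 0 < e) : e^2 ≠ 2 * x^2 := by
  intro h
  have hq : ((e/x : ℚ) : ℝ)^2 = 2 := by
    push_cast
    field_simp
    rw [mul_comm]; exact_mod_cast h
  have hpos : (0:ℝ) ≤ ((e/x : ℚ) : ℝ) := by positivity
  have : Real.sqrt 2 = ((e/x : ℚ) : ℝ) := by
    rw [← hq, Real.sqrt_sq hpos]
  exact (Rat.not_irrational _) (this ▸ irrational_sqrt_two)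

lemma aux_core (x z d e : ℚ) (hx : 0 < x) (he : 0 < e) (hde : d ≠ e)
    (h2 : 2*(x^2 + z^2 - d^2) + (2*x^2 - e^2) = 0)
    (h3 : 2*d*(x^2 + z^2 - d^2) + e*(2*x^2 - e^2) = 0) : False := by
  have hq : (d - e) * (2*x^2 - e^2) = 0 := by linear_combination d * h2 - h3
  have h0 : 2*x^2 - e^2 = 0 := by
    rcases mul_eq_zero.1 hq with h | h
    · exact absurd (sub_eq_zero.1 h) hde
    · exact h
  exact aux_rat_sq_ne_two x e hx he (by linarith)

lemma aux_v5 (a b c d e f g : ℚ) : ![a,b,c,d,e,f,g] 5 = f := rfl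

theorem no_positive_solution_rank_two_two_perfect :
    ¬ ∃ x1 x2 x3 d1 d2 d3 L : ℚ,
      0 < x1 ∧
      0 < x2 ∧
      0 < x3 ∧
      0 < d1 ∧
      0 < d2 ∧
      0 < d3 ∧
      (x1^2 + x2^2 + x3^2 - L^2) = 0 ∧
      (x2^2 + x3^2 - d1^2) + (x3^2 + x1^2 - d2^2) + (x1^2 + x2^2 - d3^2) = 0 ∧
      d1 * (x2^2 + x3^2 - d1^2) + d2 * (x3^2 + x1^2 - d2^2) + d3 * (x1^2 + x2^2 - d3^2) = 0 ∧
      x1 * (x2^2 + x3^2 - d1^2) + x2 * (x3^2 + x1^2 - d2^2) + x3 * (x1^2 + x2^2 - d3^2) = 0 ∧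
      x1 * d1 * (x2^2 + x3^2 - d1^2) + x2 * d2 * (x3^2 + x1^2 - d2^2) + x3 * d3 * (x1^2 + x2^2 - d3^2) = 0 ∧
      x1^2 * (x2^2 + x3^2 - d1^2) + x2^2 * (x3^2 + x1^2 - d2^2) + x3^2 * (x1^2 + x2^2 - d3^2) = 0 ∧
      d1^2 * (x2^2 + x3^2 - d1^2) + d2^2 * (x3^2 + x1^2 - d2^2) + d3^2 * (x1^2 + x2^2 - d3^2) = 0 ∧
      x1^2 * d1^2 * (x2^2 + x3^2 - d1^2) + x2^2 * d2^2 * (x3^2 + x1^2 - d2^2) + x3^2 * d3^2 * (x1^2 + x2^2 - d3^2) = 0 ∧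
      (!![(1:ℚ), d1; 1, d2; 1, d3]).rank = 2 ∧
      (!![(1:ℚ), x1; 1, x2; 1, x3]).rank = 2 ∧
      (!![(1:ℚ), d1, x1, x1*d1, x1^2, d1^2, x1^2*d1^2;
        1, d2, x2, x2*d2, x2^2, d2^2, x2^2*d2^2;
        1, d3, x3, x3*d3, x3^2, d3^2, x3^2*d3^2]).rank ≤ 2 := by
  rintro ⟨x1, x2, x3, d1, d2, d3, L, hx1, hx2, hx3, hd1, hd2, hd3, hp0,
    h2, h3, h4, h5, h6, h7, h8, hr1, hr2, hrN⟩
  -- the d-Vandermonde minor (columns 0,1,5) vanishes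
  have hV : (d2 - d1) * (d3 - d1) * (d3 - d2) = 0 := by
    have := aux_minor_zero _ hrN ![0, 1, 5]
    rw [show ((!![(1:ℚ), d1, x1, x1*d1, x1^2, d1^2, x1^2*d1^2;
        1, d2, x2, x2*d2, x2^2, d2^2, x2^2*d2^2;
        1, d3, x3, x3*d3, x3^2, d3^2, x3^2*d3^2]).submatrix id ![0, 1, 5]).det
        = (d2 - d1) * (d3 - d1) * (d3 - d2) from by
      simp [Matrix.det_fin_three, Matrix.submatrix_apply, Matrix.vecHead, Matrix.vecTail, aux_v5]
      ring] at this
    exact this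
  -- the minor with columns 0,1,2 vanishes
  have hM : (d2*x3 - d3*x2) - (d1*x3 - d3*x1) + (d1*x2 - d2*x1) = 0 := by
    have := aux_minor_zero _ hrN ![0, 1, 2]
    rw [show ((!![(1:ℚ), d1, x1, x1*d1, x1^2, d1^2, x1^2*d1^2;
        1, d2, x2, x2*d2, x2^2, d2^2, x2^2*d2^2;
        1, d3, x3, x3*d3, x3^2, d3^2, x3^2*d3^2]).submatrix id ![0, 1, 2]).det
        = (d2*x3 - d3*x2) - (d1*x3 - d3*x1) + (d1*x2 - d2*x1) from by
      simp [Matrix.det_fin_three, Matrix.submatrix_apply, Matrix.vecHead, Matrix.vecTail]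
      ring] at this
    exact this
  -- not all d's are equal
  have hnall : ¬ (d1 = d2 ∧ d1 = d3) := by
    rintro ⟨e1, e2⟩
    rw [← e1, ← e2] at hr1
    have := aux_rank_const d1
    omega
  rcases mul_eq_zero.1 hV with hV' | hc
  · rcases mul_eq_zero.1 hV' with ha | hb
    · -- d2 = d1
      have e21 : d2 = d1 := sub_eq_zero.1 ha
      subst e21
      have hne : d2 ≠ d3 := fun h => hnall ⟨rfl, h⟩
      have hx12 : x1 = x2 := by
        have hprod : (d3 - d2) * (x1 - x2) = 0 := by linear_combination hM
        rcases mul_eq_zero.1 hprod with h | h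
        · exact absurd (sub_eq_zero.1 h).symm hne
        · exact sub_eq_zero.1 h
      subst hx12
      exact aux_core x1 x3 d2 d3 hx1 hd3 hne (by linarith) (by linear_combination h3)
    · -- d3 = d1
      have e31 : d3 = d1 := sub_eq_zero.1 hb
      subst e31
      have hne : d3 ≠ d2 := fun h => hnall ⟨h, rfl⟩
      have hx13 : x1 = x3 := by
        have hprod : (d2 - d3) * (x3 - x1) = 0 := by linear_combination hM
        rcases mul_eq_zero.1 hprod with h | h
        · exact absurd (sub_eq_zero.1 h).symm hne
        · exact (sub_eq_zero.1 h).symm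
      subst hx13
      exact aux_core x1 x2 d3 d2 hx1 hd2 hne (by linarith) (by linear_combination h3)
  · -- d3 = d2
    have e32 : d3 = d2 := sub_eq_zero.1 hc
    subst e32
    have hne : d3 ≠ d1 := fun h => hnall ⟨h.symm, h.symm⟩
    have hx23 : x2 = x3 := by
      have hprod : (d3 - d1) * (x3 - x2) = 0 := by linear_combination hM
      rcases mul_eq_zero.1 hprod with h | h
      · exact absurd (sub_eq_zero.1 h) hne
      · exact (sub_eq_zero.1 h).symm
    subst hx23
    exact aux_core x2 x1 d3 d1 hx2 hd1 hne (by linarith) (by linear_combination h3)
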